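/- Let t ≥ 2 and let U₁, …, U_t be finite sets, each of size at least t − 1, such that there do not exist pairwise distinct elements i₁ ∈ U₁, …, i_t ∈ U_t. Then U₁ = U₂ = ⋯ = U_t and each |U_i| = t − 1. -/
import Mathlib


open Finset

theorem stmt8 {α : Type*} [DecidableEq α] (t : ℕ) (ht : 2 ≤ t)
    (U : Fin t → Finset α)
    (hcard : ∀ i, t - 1 ≤ (U i).card)
    (hsdr : ¬ ∃ f : Fin t → α, Function.Injective f ∧ ∀ i, f i ∈ U i) :
    (∀ i j, U i = U j) ∧ ∀ i, (U i).card = t - 1 := by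
  rw [← Finset.all_card_le_biUnion_card_iff_existsInjective'] at hsdr
  push_neg at hsdr
  obtain ⟨s, hs⟩ := hsdr
  -- s is nonempty
  have hsne : s.Nonempty := by
    rcases s.eq_empty_or_nonempty with h | h
    · simp [h] at hs
    · exact h
  obtain ⟨i0, hi0⟩ := hsne
  have hsub : U i0 ⊆ s.biUnion U := fun x hx => Finset.mem_biUnion.2 ⟨i0, hi0, hx⟩
  have h1 : t - 1 ≤ (s.biUnion U).card := le_trans (hcard i0) (Finset.card_le_card hsub)
  have h2 : (s.biUnion U).card < s.card := hs
  have h3 : s.card ≤ t := by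
    simpa using Finset.card_le_card (Finset.subset_univ s)
  have hscard : s.card = t := by omega
  have hsuniv : s = Finset.univ := Finset.eq_univ_of_card s (by simpa using hscard)
  have hUcard : (s.biUnion U).card = t - 1 := by omega
  have hall : ∀ i, U i = s.biUnion U := by
    intro i
    apply Finset.eq_of_subset_of_card_le
    · intro x hx
      exact Finset.mem_biUnion.2 ⟨i, hsuniv ▸ Finset.mem_univ i, hx⟩
    · rw [hUcard]; exact hcard i
  exact ⟨fun i j => (hall i).trans (hall j).symm,
    fun i => by rw [hall i, hUcard]⟩
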